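/- arXiv:math/0608767 — 5 statements merged into one kernel-verified Lean document; each statement's English description precedes it below -/
import Mathlib

section
/- Let w : (0,∞) → ℂ be measurable with Im w(k) > 0 for almost every k > 0, and set δ(k) = Im w(k)/k. Define SQS = ∫₀^∞ log[ |w(k)+ik|² / (4k·Im w(k)) ] k² dk, QS = ∫₀^∞ log[ δ(k)/4 + 1/2 + 1/(4δ(k)) ] k² dk, and R = ∫₀^∞ log[ 1 + (Re w(k)/k)² ] k² dk, each interpreted as an integral with values in [0,∞] of a nonnegative integrand. Then QS ≤ SQS ≤ QS + R and R ≤ 55·SQS. In particular, SQS < ∞ if and only if QS + R < ∞. -/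
open MeasureTheory Set
open scoped ENNReal

/-- The Strong Quasi-Szegő integral `∫₀^∞ log[ |w(k)+ik|² / (4k·Im w(k)) ] k² dk`. -/
noncomputable def SQS (w : ℝ → ℂ) : ℝ≥0∞ :=
  ∫⁻ k in Ioi (0 : ℝ),
    ENNReal.ofReal
      (Real.log (‖w k + Complex.I * k‖ ^ 2 / (4 * k * (w k).im)) * k ^ 2)

/-- The Quasi-Szegő integral `∫₀^∞ log[ δ(k)/4 + 1/2 + 1/(4δ(k)) ] k² dk`
with `δ(k) = Im w(k) / k`. -/
noncomputable def QS (w : ℝ → ℂ) : ℝ≥0∞ :=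
  ∫⁻ k in Ioi (0 : ℝ),
    ENNReal.ofReal
      (Real.log ((w k).im / k / 4 + 1 / 2 + 1 / (4 * ((w k).im / k))) * k ^ 2)

/-- The integral `R = ∫₀^∞ log[ 1 + (Re w(k)/k)² ] k² dk`. -/
noncomputable def Rterm (w : ℝ → ℂ) : ℝ≥0∞ :=
  ∫⁻ k in Ioi (0 : ℝ),
    ENNReal.ofReal (Real.log (1 + ((w k).re / k) ^ 2) * k ^ 2)

/-- Pointwise facts at a single `k`. -/
theorem stmt_2_pointwise (u v k : ℝ) (hk : 0 < k) (hv : 0 < v) :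
    Real.log (v/k/4 + 1/2 + 1/(4*(v/k))) ≤ Real.log ((u^2+(v+k)^2)/(4*k*v)) ∧
    Real.log ((u^2+(v+k)^2)/(4*k*v)) ≤
      Real.log (v/k/4 + 1/2 + 1/(4*(v/k))) + Real.log (1 + (u/k)^2) ∧
    Real.log (1 + (u/k)^2) ≤ 55 * Real.log ((u^2+(v+k)^2)/(4*k*v)) ∧
    0 ≤ Real.log (v/k/4 + 1/2 + 1/(4*(v/k))) ∧
    0 ≤ Real.log ((u^2+(v+k)^2)/(4*k*v)) ∧
    0 ≤ Real.log (1 + (u/k)^2) := by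
  have hkv : (0:ℝ) < 4*k*v := by positivity
  have hBdef : v/k/4 + 1/2 + 1/(4*(v/k)) = (v+k)^2/(4*k*v) := by field_simp; ring
  set A := (u^2+(v+k)^2)/(4*k*v) with hAdef
  set B := (v+k)^2/(4*k*v) with hBdef'
  set C := 1 + (u/k)^2 with hCdef
  have hC' : C = (k^2+u^2)/k^2 := by rw [hCdef]; field_simp
  have hB1 : (1:ℝ) ≤ B := by
    rw [hBdef', le_div_iff₀ hkv]; nlinarith [sq_nonneg (v-k)]
  have hBA : B ≤ A := by
    rw [hAdef, hBdef']; gcongr; nlinarith [sq_nonneg u]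
  have hA1 : (1:ℝ) ≤ A := hB1.trans hBA
  have hC1 : (1:ℝ) ≤ C := by rw [hCdef]; nlinarith [sq_nonneg (u/k)]
  have hABC : A ≤ B * C := by
    rw [hAdef, hBdef', hC', div_mul_div_comm, div_le_div_iff₀ hkv (by positivity)]
    nlinarith [mul_nonneg (mul_nonneg (sq_nonneg u) hv.le) hk.le,
      mul_nonneg (mul_nonneg (mul_nonneg (sq_nonneg u) hv.le) hv.le) hk.le]
  have hCA4 : C ≤ A^4 := by
    have h2 : C ≤ (2*A - 1)^2 := by
      have hx : 2*A - 1 = (u^2+v^2+k^2)/(2*k*v) := by rw [hAdef]; field_simp; ring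
      rw [hx, hC', div_pow, div_le_div_iff₀ (by positivity) (by positivity)]
      nlinarith [mul_nonneg (sq_nonneg k) (sq_nonneg (u^2+k^2-v^2))]
    have h3 : (2*A-1)^2 ≤ A^4 := by
      nlinarith [mul_nonneg (sq_nonneg (A-1)) (by nlinarith : (0:ℝ) ≤ A^2+2*A-1)]
    linarith
  have hlogA0 : 0 ≤ Real.log A := Real.log_nonneg hA1
  have hlogB0 : 0 ≤ Real.log B := Real.log_nonneg hB1
  have hlogC0 : 0 ≤ Real.log C := Real.log_nonneg hC1
  refine ⟨?_, ?_, ?_, ?_, ?_, ?_⟩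
  · rw [hBdef]; exact Real.log_le_log (by linarith) hBA
  · rw [hBdef, ← Real.log_mul (by linarith) (by linarith)]
    exact Real.log_le_log (by linarith) hABC
  · calc Real.log C ≤ Real.log (A^4) := Real.log_le_log (by linarith) hCA4
      _ = 4 * Real.log A := by rw [Real.log_pow]; push_cast; ring
      _ ≤ 55 * Real.log A := by linarith
  · rw [hBdef]; exact hlogB0
  · exact hlogA0
  · exact hlogC0

/-- Let `w : (0,∞) → ℂ` be measurable with `Im w(k) > 0` for a.e. `k > 0`.
Then `QS ≤ SQS ≤ QS + R` and `R ≤ 55·SQS`; in particular `SQS < ∞ ↔ QS + R < ∞`. -/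
theorem stmt_2 (w : ℝ → ℂ) (hw : Measurable w)
    (him : ∀ᵐ k ∂(volume.restrict (Ioi (0 : ℝ))), 0 < (w k).im) :
    QS w ≤ SQS w ∧ SQS w ≤ QS w + Rterm w ∧ Rterm w ≤ 55 * SQS w ∧
      (SQS w < ⊤ ↔ QS w + Rterm w < ⊤) := by
  set fS := fun k : ℝ => ENNReal.ofReal
      (Real.log (‖w k + Complex.I * k‖ ^ 2 / (4 * k * (w k).im)) * k ^ 2)
    with hfS
  set fQ := fun k : ℝ => ENNReal.ofReal
      (Real.log ((w k).im / k / 4 + 1 / 2 + 1 / (4 * ((w k).im / k))) * k ^ 2) with hfQ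
  set fR := fun k : ℝ => ENNReal.ofReal (Real.log (1 + ((w k).re / k) ^ 2) * k ^ 2) with hfR
  have hmQ : Measurable fQ := by
    have h1 : Measurable fun k : ℝ => (w k).im := Complex.measurable_im.comp hw
    apply Measurable.ennreal_ofReal
    apply Measurable.mul _ (by fun_prop)
    apply Measurable.log
    fun_prop
  have key : ∀ᵐ k ∂(volume.restrict (Ioi (0 : ℝ))),
      fQ k ≤ fS k ∧ fS k ≤ fQ k + fR k ∧ fR k ≤ 55 * fS k := by
    filter_upwards [him, ae_restrict_mem measurableSet_Ioi] with k hv hk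
    have hk0 : (0:ℝ) < k := hk
    have habs : ‖w k + Complex.I * k‖ ^ 2 = (w k).re^2 + ((w k).im + k)^2 := by
      rw [Complex.sq_norm, Complex.normSq_apply]
      simp [Complex.add_re, Complex.add_im, Complex.mul_re, Complex.mul_im]
      ring
    obtain ⟨p1, p2, p3, nB, nA, nC⟩ := stmt_2_pointwise (w k).re (w k).im k hk0 hv
    have hk2 : (0:ℝ) ≤ k^2 := sq_nonneg k
    refine ⟨?_, ?_, ?_⟩
    · rw [hfQ, hfS]
      dsimp only
      rw [habs]
      exact ENNReal.ofReal_le_ofReal (mul_le_mul_of_nonneg_right p1 hk2)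
    · rw [hfQ, hfS, hfR]
      dsimp only
      rw [habs, ← ENNReal.ofReal_add (mul_nonneg nB hk2) (mul_nonneg nC hk2)]
      exact ENNReal.ofReal_le_ofReal (by nlinarith [mul_le_mul_of_nonneg_right p2 hk2])
    · rw [hfR, hfS]
      dsimp only
      rw [habs]
      calc ENNReal.ofReal (Real.log (1 + ((w k).re / k) ^ 2) * k ^ 2)
          ≤ ENNReal.ofReal (55 * (Real.log (((w k).re^2 + ((w k).im + k)^2)/(4*k*(w k).im)) * k^2)) :=
            ENNReal.ofReal_le_ofReal (by nlinarith [mul_le_mul_of_nonneg_right p3 hk2])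
        _ = 55 * ENNReal.ofReal (Real.log (((w k).re^2 + ((w k).im + k)^2)/(4*k*(w k).im)) * k^2) := by
            rw [ENNReal.ofReal_mul (by norm_num)]
            norm_num
  have hQS : QS w ≤ SQS w := lintegral_mono_ae (key.mono fun k h => h.1)
  have hSQR : SQS w ≤ QS w + Rterm w := by
    calc SQS w ≤ ∫⁻ k in Ioi (0:ℝ), (fQ k + fR k) :=
          lintegral_mono_ae (key.mono fun k h => h.2.1)
      _ = QS w + Rterm w := lintegral_add_left hmQ _
  have hR : Rterm w ≤ 55 * SQS w := by
    calc Rterm w ≤ ∫⁻ k in Ioi (0:ℝ), 55 * fS k :=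
          lintegral_mono_ae (key.mono fun k h => h.2.2)
      _ = 55 * SQS w := lintegral_const_mul' 55 _ (by norm_num)
  refine ⟨hQS, hSQR, hR, ?_, ?_⟩
  · intro h
    calc QS w + Rterm w ≤ SQS w + 55 * SQS w := add_le_add hQS hR
      _ = 56 * SQS w := by ring
      _ < ⊤ := ENNReal.mul_lt_top (by norm_num) h
  · intro h
    exact lt_of_le_of_lt hSQR h
end

section
/- Let τ be a locally finite positive Borel measure on [1,∞) with Σ_{n=1}^∞ τ([n,n+1])² < ∞. Then the function F(q) = π^{-1/2} ∫_{[1,∞)} p⁻¹ e^{-(q-p)²} dτ(p) is finite for every q ∈ ℝ and belongs to L²(ℝ, dq). -/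
open MeasureTheory Set
open scoped ENNReal

private lemma natdist_cast (n m : ℕ) : (Nat.dist n m : ℝ) = |(n : ℝ) - m| := by
  rcases le_total n m with h | h
  · rw [Nat.dist_eq_sub_of_le h, abs_sub_comm,
      abs_of_nonneg (sub_nonneg.2 (Nat.cast_le.2 h)), Nat.cast_sub h]
  · rw [Nat.dist_eq_sub_of_le_right h,
      abs_of_nonneg (sub_nonneg.2 (Nat.cast_le.2 h)), Nat.cast_sub h]

private lemma exp_bound1 (q p c : ℝ) (h1 : c ≤ p) (h2 : p ≤ c + 1) :
    Real.exp (-(q - p) ^ 2) ≤ Real.exp 1 * Real.exp (-(q - c) ^ 2 / 2) := by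
  rw [← Real.exp_add]
  apply Real.exp_le_exp.2
  nlinarith [sq_nonneg (q - c - 2 * (p - c)),
    mul_nonneg (by linarith : (0:ℝ) ≤ c + 1 - p) (by linarith : (0:ℝ) ≤ p - c + 1)]

private lemma gauss_mul (A B q : ℝ) :
    (Real.exp 1 * Real.exp (-(q - A) ^ 2 / 2)) * (Real.exp 1 * Real.exp (-(q - B) ^ 2 / 2))
      = (Real.exp 1 * Real.exp 1 * Real.exp (-(A - B) ^ 2 / 4))
        * Real.exp (-(q - (A + B) / 2) ^ 2) := by
  have h : -(q - A) ^ 2 / 2 + -(q - B) ^ 2 / 2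
      = -(A - B) ^ 2 / 4 + -(q - (A + B) / 2) ^ 2 := by ring
  calc (Real.exp 1 * Real.exp (-(q - A) ^ 2 / 2)) * (Real.exp 1 * Real.exp (-(q - B) ^ 2 / 2))
      = (Real.exp 1 * Real.exp 1) * Real.exp (-(q - A) ^ 2 / 2 + -(q - B) ^ 2 / 2) := by
        rw [Real.exp_add]; ring
    _ = _ := by rw [h, Real.exp_add]; ring

private lemma lintegral_gauss (M : ℝ) :
    ∫⁻ q : ℝ, ENNReal.ofReal (Real.exp (-(q - M) ^ 2))
      = ENNReal.ofReal (Real.sqrt Real.pi) := by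
  have h1 : (∫⁻ q : ℝ, ENNReal.ofReal (Real.exp (-(q - M) ^ 2)))
      = ∫⁻ q : ℝ, ENNReal.ofReal (Real.exp (-q ^ 2)) :=
    lintegral_sub_right_eq_self (fun q => ENNReal.ofReal (Real.exp (-q ^ 2))) M
  have hint : Integrable (fun q : ℝ => Real.exp (-q ^ 2)) := by
    simpa using integrable_exp_neg_mul_sq (one_pos)
  rw [h1, ← ofReal_integral_eq_lintegral_ofReal hint
    (ae_of_all _ fun x => (Real.exp_pos _).le)]
  congr 1
  simpa using integral_gaussian 1

private lemma tsum_pow_dist_le {ρ : ℝ≥0∞} (hρ : ρ ≤ 1) (n : ℕ) :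
    ∑' m : ℕ, ρ ^ (Nat.dist n m) ≤ 2 * ∑' k : ℕ, ρ ^ k := by
  rw [← Summable.sum_add_tsum_nat_add' (f := fun m => ρ ^ Nat.dist n m) (k := n + 1)
    ENNReal.summable, two_mul]
  gcongr ?_ + ?_
  · calc ∑ m ∈ Finset.range (n + 1), ρ ^ Nat.dist n m
        = ∑ m ∈ Finset.range (n + 1), ρ ^ m := by
          conv_rhs => rw [← Finset.sum_range_reflect]
          refine Finset.sum_congr rfl fun m hm => ?_
          simp only [Finset.mem_range] at hm
          congr 1
          simp only [Nat.dist]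
          omega
      _ ≤ _ := ENNReal.sum_le_tsum _
  · refine ENNReal.tsum_le_tsum fun i => ?_
    have h : Nat.dist n (i + (n + 1)) = i + 1 := by simp only [Nat.dist]; omega
    rw [h]
    exact pow_le_pow_right_of_le_one' hρ (Nat.le_succ i)

/-- Let `τ` be a locally finite positive Borel measure on `[1,∞)` with
`Σ_{n=1}^∞ τ([n,n+1])² < ∞`.  Then `F(q) = π^{-1/2} ∫_{[1,∞)} p⁻¹ e^{-(q-p)²} dτ(p)` is
finite for every `q ∈ ℝ` and belongs to `L²(ℝ, dq)`. -/
theorem stmt_5 (τ : Measure ℝ) [IsLocallyFiniteMeasure τ] (hsupp : τ (Iio 1) = 0)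
    (hl2 : (∑' n : ℕ, (τ (Icc ((n : ℝ) + 1) ((n : ℝ) + 2))) ^ 2) < ⊤) :
    (∀ q : ℝ,
      (∫⁻ p in Ici (1 : ℝ), ENNReal.ofReal (p⁻¹ * Real.exp (-(q - p) ^ 2)) ∂τ) < ⊤) ∧
    MemLp
      (fun q : ℝ => (Real.sqrt Real.pi)⁻¹ *
        (∫⁻ p in Ici (1 : ℝ), ENNReal.ofReal (p⁻¹ * Real.exp (-(q - p) ^ 2)) ∂τ).toReal)
      2 volume := by
  set a : ℕ → ℝ≥0∞ := fun n => τ (Icc ((n : ℝ) + 1) ((n : ℝ) + 2)) with ha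
  set w : ℕ → ℝ → ℝ≥0∞ := fun n q =>
    ENNReal.ofReal (Real.exp 1 * Real.exp (-(q - ((n : ℝ) + 1)) ^ 2 / 2)) with hw
  set Φ : ℝ → ℝ≥0∞ := fun q =>
    ∫⁻ p in Ici (1 : ℝ), ENNReal.ofReal (p⁻¹ * Real.exp (-(q - p) ^ 2)) ∂τ with hΦ
  have hT : (∑' n : ℕ, a n ^ 2) < ⊤ := hl2
  -- each a n is bounded
  have haB : ∀ n, a n ≤ 1 + ∑' k : ℕ, a k ^ 2 := by
    intro n
    rcases le_total (a n) 1 with h | h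
    · exact h.trans le_self_add
    · have h2 : a n ≤ a n ^ 2 := by
        calc a n = 1 * a n := (one_mul _).symm
          _ ≤ a n * a n := by gcongr
          _ = a n ^ 2 := (sq (a n)).symm
      exact h2.trans ((ENNReal.le_tsum n).trans le_add_self)
  have hwm : ∀ n, Measurable (w n) := by
    intro n
    apply Measurable.ennreal_ofReal
    fun_prop
  -- covering of [1, ∞)
  have hcover : Ici (1 : ℝ) ⊆ ⋃ n : ℕ, Icc ((n : ℝ) + 1) ((n : ℝ) + 2) := by
    intro x hx
    have hx1 : (1 : ℝ) ≤ x := hx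
    have h0 : (0 : ℝ) ≤ x - 1 := by linarith
    refine mem_iUnion.2 ⟨⌊x - 1⌋₊, ?_, ?_⟩
    · have := Nat.floor_le h0; linarith
    · have := Nat.lt_floor_add_one (x - 1); linarith
  -- the key pointwise bound
  have hkey : ∀ q : ℝ, Φ q ≤ ∑' n : ℕ, w n q * a n := by
    intro q
    calc Φ q ≤ ∫⁻ p in ⋃ n : ℕ, Icc ((n : ℝ) + 1) ((n : ℝ) + 2),
          ENNReal.ofReal (p⁻¹ * Real.exp (-(q - p) ^ 2)) ∂τ := lintegral_mono_set hcover
      _ ≤ ∑' n : ℕ, ∫⁻ p in Icc ((n : ℝ) + 1) ((n : ℝ) + 2),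
          ENNReal.ofReal (p⁻¹ * Real.exp (-(q - p) ^ 2)) ∂τ := lintegral_iUnion_le _ _
      _ ≤ ∑' n : ℕ, w n q * a n := by
          refine ENNReal.tsum_le_tsum fun n => ?_
          have hb : ∀ p ∈ Icc ((n : ℝ) + 1) ((n : ℝ) + 2),
              ENNReal.ofReal (p⁻¹ * Real.exp (-(q - p) ^ 2)) ≤ w n q := by
            intro p hp
            apply ENNReal.ofReal_le_ofReal
            have hn0 : (0 : ℝ) ≤ (n : ℝ) := Nat.cast_nonneg n
            have hp1 : (1 : ℝ) ≤ p := by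
              have := hp.1; linarith
            have hinv : p⁻¹ ≤ 1 := inv_le_one_of_one_le₀ hp1
            have hexp := exp_bound1 q p ((n : ℝ) + 1) hp.1 (by linarith [hp.2])
            calc p⁻¹ * Real.exp (-(q - p) ^ 2)
                ≤ 1 * (Real.exp 1 * Real.exp (-(q - ((n : ℝ) + 1)) ^ 2 / 2)) :=
                  mul_le_mul hinv hexp (Real.exp_pos _).le zero_le_one
              _ = _ := one_mul _
          calc (∫⁻ p in Icc ((n : ℝ) + 1) ((n : ℝ) + 2),
                ENNReal.ofReal (p⁻¹ * Real.exp (-(q - p) ^ 2)) ∂τ)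
              ≤ ∫⁻ _ in Icc ((n : ℝ) + 1) ((n : ℝ) + 2), w n q ∂τ :=
                setLIntegral_mono measurable_const hb
            _ = w n q * a n := setLIntegral_const _ _
  -- Part 1 : finiteness
  have hfin : ∀ q : ℝ, Φ q < ⊤ := by
    intro q
    refine (hkey q).trans_lt ?_
    have hwb : ∀ n : ℕ, w n q ≤ ENNReal.ofReal (Real.exp (q + 1 / 2)) *
        ENNReal.ofReal (Real.exp (-1)) ^ n := by
      intro n
      rw [← ENNReal.ofReal_pow (Real.exp_pos _).le,
        ← ENNReal.ofReal_mul (Real.exp_pos _).le]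
      apply ENNReal.ofReal_le_ofReal
      rw [← Real.exp_add, ← Real.exp_nat_mul, ← Real.exp_add]
      apply Real.exp_le_exp.2
      nlinarith [sq_nonneg (q - (n : ℝ))]
    have h1 : (1 + ∑' k : ℕ, a k ^ 2) < ⊤ := by
      rw [ENNReal.add_lt_top]; exact ⟨ENNReal.one_lt_top, hT⟩
    have h2 : (1 - ENNReal.ofReal (Real.exp (-1)))⁻¹ < ⊤ := by
      rw [ENNReal.inv_lt_top]
      rw [tsub_pos_iff_lt]
      exact ENNReal.ofReal_lt_one.2 (Real.exp_lt_one_iff.2 (by norm_num))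
    calc ∑' n : ℕ, w n q * a n
        ≤ ∑' n : ℕ, (ENNReal.ofReal (Real.exp (q + 1 / 2)) *
            ENNReal.ofReal (Real.exp (-1)) ^ n) * (1 + ∑' k : ℕ, a k ^ 2) :=
          ENNReal.tsum_le_tsum fun n => mul_le_mul' (hwb n) (haB n)
      _ = (ENNReal.ofReal (Real.exp (q + 1 / 2)) * (1 + ∑' k : ℕ, a k ^ 2)) *
            ∑' n : ℕ, ENNReal.ofReal (Real.exp (-1)) ^ n := by
          rw [← ENNReal.tsum_mul_left]
          exact tsum_congr fun n => by ring
      _ = (ENNReal.ofReal (Real.exp (q + 1 / 2)) * (1 + ∑' k : ℕ, a k ^ 2)) *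
            (1 - ENNReal.ofReal (Real.exp (-1)))⁻¹ := by rw [ENNReal.tsum_geometric]
      _ < ⊤ := ENNReal.mul_lt_top (ENNReal.mul_lt_top ENNReal.ofReal_lt_top h1) h2
  -- measurability
  have hgm : Measurable (fun x : ℝ × ℝ =>
      ENNReal.ofReal (x.2⁻¹ * Real.exp (-(x.1 - x.2) ^ 2))) := by
    apply Measurable.ennreal_ofReal
    fun_prop
  have hΦm : Measurable Φ := by
    rw [hΦ]
    exact hgm.lintegral_prod_right'
  -- Part 2 : L² bound
  refine ⟨hfin, ?_, ?_⟩
  · exact ((hΦm.ennreal_toReal).const_mul _).aestronglyMeasurable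
  -- the squared bound
  have hsq : ∀ q, Φ q ^ 2 ≤ ∑' n : ℕ, ∑' m : ℕ, (w n q * a n) * (w m q * a m) := by
    intro q
    have h1 : Φ q ^ 2 ≤ (∑' n : ℕ, w n q * a n) ^ 2 := by gcongr; exact hkey q
    refine h1.trans (le_of_eq ?_)
    rw [sq, ← ENNReal.tsum_mul_right]
    exact tsum_congr fun n => ENNReal.tsum_mul_left.symm
  have hwam : ∀ n : ℕ, Measurable fun q => w n q * a n := fun n => (hwm n).mul_const _
  have hΦ2 : (∫⁻ q : ℝ, Φ q ^ 2)
      ≤ ∑' n : ℕ, ∑' m : ℕ, ∫⁻ q : ℝ, (w n q * a n) * (w m q * a m) := by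
    calc (∫⁻ q : ℝ, Φ q ^ 2)
        ≤ ∫⁻ q : ℝ, ∑' n : ℕ, ∑' m : ℕ, (w n q * a n) * (w m q * a m) :=
          lintegral_mono hsq
      _ = ∑' n : ℕ, ∫⁻ q : ℝ, ∑' m : ℕ, (w n q * a n) * (w m q * a m) :=
          lintegral_tsum fun n =>
            (Measurable.ennreal_tsum fun m => (hwam n).mul (hwam m)).aemeasurable
      _ = ∑' n : ℕ, ∑' m : ℕ, ∫⁻ q : ℝ, (w n q * a n) * (w m q * a m) :=
          tsum_congr fun n => lintegral_tsum fun m => ((hwam n).mul (hwam m)).aemeasurable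
  -- evaluate the cross integrals
  set K1 : ℝ≥0∞ := ENNReal.ofReal (Real.exp 1 * Real.exp 1 * Real.sqrt Real.pi) with hK1
  have hI : ∀ n m : ℕ, (∫⁻ q : ℝ, (w n q * a n) * (w m q * a m))
      ≤ (a n * a m) * (K1 * ENNReal.ofReal (Real.exp (-((n : ℝ) - m) ^ 2 / 4))) := by
    intro n m
    have hrw : ∀ q : ℝ, (w n q * a n) * (w m q * a m) = (a n * a m) * (w n q * w m q) :=
      fun q => by ring
    simp_rw [hrw]
    rw [lintegral_const_mul _ (f := fun q => w n q * w m q) ((hwm n).mul (hwm m))]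
    refine mul_le_mul_right ?_ _
    have hprod : ∀ q : ℝ, w n q * w m q
        = ENNReal.ofReal ((Real.exp 1 * Real.exp 1 * Real.exp (-((n : ℝ) - m) ^ 2 / 4))
          * Real.exp (-(q - (((n : ℝ) + 1) + ((m : ℝ) + 1)) / 2) ^ 2)) := by
      intro q
      rw [hw]
      rw [← ENNReal.ofReal_mul (by positivity)]
      congr 1
      have hd : (((n : ℝ) + 1) - ((m : ℝ) + 1)) = (n : ℝ) - m := by ring
      have := gauss_mul ((n : ℝ) + 1) ((m : ℝ) + 1) q
      rw [hd] at this
      exact this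
    simp_rw [hprod,
      ENNReal.ofReal_mul (by positivity :
        (0:ℝ) ≤ Real.exp 1 * Real.exp 1 * Real.exp (-((n : ℝ) - m) ^ 2 / 4))]
    rw [lintegral_const_mul _ (by apply Measurable.ennreal_ofReal; fun_prop),
      lintegral_gauss]
    rw [← ENNReal.ofReal_mul (by positivity), hK1, ← ENNReal.ofReal_mul (by positivity)]
    exact ENNReal.ofReal_le_ofReal (le_of_eq (by ring))
  -- Schur-type bound for the double sum
  set ρ : ℝ≥0∞ := ENNReal.ofReal (Real.exp (-1)) with hρ
  have hρ1 : ρ ≤ 1 := (ENNReal.ofReal_lt_one.2 (Real.exp_lt_one_iff.2 (by norm_num))).le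
  set K2 : ℝ≥0∞ := K1 * ENNReal.ofReal (Real.exp 1) with hK2
  have hK2top : K2 ≠ ⊤ := by
    rw [hK2, hK1]
    exact (ENNReal.mul_lt_top ENNReal.ofReal_lt_top ENNReal.ofReal_lt_top).ne
  have hexp4 : ∀ n m : ℕ, ENNReal.ofReal (Real.exp (-((n : ℝ) - m) ^ 2 / 4))
      ≤ ENNReal.ofReal (Real.exp 1) * ρ ^ Nat.dist n m := by
    intro n m
    rw [hρ, ← ENNReal.ofReal_pow (Real.exp_pos _).le,
      ← ENNReal.ofReal_mul (Real.exp_pos _).le]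
    apply ENNReal.ofReal_le_ofReal
    rw [← Real.exp_nat_mul, ← Real.exp_add]
    apply Real.exp_le_exp.2
    rw [natdist_cast]
    nlinarith [sq_nonneg (|(n : ℝ) - m| - 2), sq_abs ((n : ℝ) - m), abs_nonneg ((n : ℝ) - m)]
  have hterm : ∀ n m : ℕ,
      (a n * a m) * (K1 * ENNReal.ofReal (Real.exp (-((n : ℝ) - m) ^ 2 / 4)))
        ≤ K2 * (a n ^ 2 * ρ ^ Nat.dist n m) + K2 * (a m ^ 2 * ρ ^ Nat.dist n m) := by
    intro n m
    have h1 : K1 * ENNReal.ofReal (Real.exp (-((n : ℝ) - m) ^ 2 / 4))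
        ≤ K2 * ρ ^ Nat.dist n m := by
      rw [hK2, mul_assoc]
      exact mul_le_mul_right (hexp4 n m) K1
    have h2 : a n * a m ≤ a n ^ 2 + a m ^ 2 := by
      rcases le_total (a n) (a m) with h | h
      · calc a n * a m ≤ a m * a m := mul_le_mul_left h _
          _ = a m ^ 2 := (sq _).symm
          _ ≤ _ := le_add_self
      · calc a n * a m ≤ a n * a n := mul_le_mul_right h _
          _ = a n ^ 2 := (sq _).symm
          _ ≤ _ := le_self_add
    calc (a n * a m) * (K1 * ENNReal.ofReal (Real.exp (-((n : ℝ) - m) ^ 2 / 4)))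
        ≤ (a n ^ 2 + a m ^ 2) * (K2 * ρ ^ Nat.dist n m) := mul_le_mul' h2 h1
      _ = _ := by ring
  have hgeo : (∑' k : ℕ, ρ ^ k) < ⊤ := by
    rw [ENNReal.tsum_geometric, ENNReal.inv_lt_top, tsub_pos_iff_lt]
    exact ENNReal.ofReal_lt_one.2 (Real.exp_lt_one_iff.2 (by norm_num))
  have hhalf : ∀ b : ℕ → ℝ≥0∞, (∑' k : ℕ, b k) < ⊤ →
      (∑' n : ℕ, ∑' m : ℕ, b n * ρ ^ Nat.dist n m) < ⊤ := by
    intro b hb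
    calc (∑' n : ℕ, ∑' m : ℕ, b n * ρ ^ Nat.dist n m)
        = ∑' n : ℕ, b n * ∑' m : ℕ, ρ ^ Nat.dist n m :=
          tsum_congr fun n => ENNReal.tsum_mul_left
      _ ≤ ∑' n : ℕ, b n * (2 * ∑' k : ℕ, ρ ^ k) :=
          ENNReal.tsum_le_tsum fun n => mul_le_mul_right (tsum_pow_dist_le hρ1 n) _
      _ = (∑' n : ℕ, b n) * (2 * ∑' k : ℕ, ρ ^ k) := ENNReal.tsum_mul_right
      _ < ⊤ := ENNReal.mul_lt_top hb
          (ENNReal.mul_lt_top (by norm_num) hgeo)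
  have hmain : (∫⁻ q : ℝ, Φ q ^ 2) < ⊤ := by
    refine hΦ2.trans_lt ?_
    calc (∑' n : ℕ, ∑' m : ℕ, ∫⁻ q : ℝ, (w n q * a n) * (w m q * a m))
        ≤ ∑' n : ℕ, ∑' m : ℕ,
            (K2 * (a n ^ 2 * ρ ^ Nat.dist n m) + K2 * (a m ^ 2 * ρ ^ Nat.dist n m)) :=
          ENNReal.tsum_le_tsum fun n => ENNReal.tsum_le_tsum fun m =>
            (hI n m).trans (hterm n m)
      _ = K2 * (∑' n : ℕ, ∑' m : ℕ, a n ^ 2 * ρ ^ Nat.dist n m)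
          + K2 * (∑' n : ℕ, ∑' m : ℕ, a m ^ 2 * ρ ^ Nat.dist n m) := by
          rw [← ENNReal.tsum_mul_left (a := K2), ← ENNReal.tsum_mul_left (a := K2),
            ← ENNReal.tsum_add]
          refine tsum_congr fun n => ?_
          rw [← ENNReal.tsum_mul_left, ← ENNReal.tsum_mul_left, ← ENNReal.tsum_add]
      _ < ⊤ := by
          have hswap : (∑' n : ℕ, ∑' m : ℕ, a m ^ 2 * ρ ^ Nat.dist n m)
              = ∑' m : ℕ, ∑' n : ℕ, a m ^ 2 * ρ ^ Nat.dist m n := by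
            rw [ENNReal.tsum_comm]
            exact tsum_congr fun m => tsum_congr fun n => by rw [Nat.dist_comm]
          rw [ENNReal.add_lt_top]
          constructor
          · exact ENNReal.mul_lt_top hK2top.lt_top (hhalf _ hT)
          · rw [hswap]
            exact ENNReal.mul_lt_top hK2top.lt_top (hhalf _ hT)
  -- conclude
  rw [eLpNorm_eq_lintegral_rpow_enorm_toReal two_ne_zero ENNReal.ofNat_ne_top]
  refine ENNReal.rpow_lt_top_of_nonneg (by norm_num) ?_
  have hpoint : ∀ q : ℝ,
      (‖(Real.sqrt Real.pi)⁻¹ * (Φ q).toReal‖ₑ) ^ (2 : ℝ≥0∞).toReal ≤ Φ q ^ 2 := by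
    intro q
    have h0 : 0 ≤ (Real.sqrt Real.pi)⁻¹ * (Φ q).toReal := by positivity
    rw [Real.enorm_eq_ofReal h0]
    have hπ : (Real.sqrt Real.pi)⁻¹ ≤ 1 := by
      apply inv_le_one_of_one_le₀
      rw [Real.one_le_sqrt]
      linarith [Real.pi_gt_three]
    have h1 : ENNReal.ofReal ((Real.sqrt Real.pi)⁻¹ * (Φ q).toReal) ≤ Φ q := by
      refine le_trans (ENNReal.ofReal_le_ofReal ?_) ENNReal.ofReal_toReal_le
      calc (Real.sqrt Real.pi)⁻¹ * (Φ q).toReal ≤ 1 * (Φ q).toReal :=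
            mul_le_mul_of_nonneg_right hπ ENNReal.toReal_nonneg
        _ = _ := one_mul _
    calc (ENNReal.ofReal ((Real.sqrt Real.pi)⁻¹ * (Φ q).toReal)) ^ (2 : ℝ≥0∞).toReal
        ≤ Φ q ^ (2 : ℝ≥0∞).toReal := ENNReal.rpow_le_rpow h1 (by norm_num)
      _ = Φ q ^ (2 : ℕ) := by
          rw [show ((2 : ℝ≥0∞).toReal) = ((2 : ℕ) : ℝ) by norm_num, ENNReal.rpow_natCast]
  exact (lt_of_le_of_lt (lintegral_mono hpoint) hmain).ne
end

section
/- Let k be a nonzero complex number with Re k > 0 and Im k ≥ 0, so that k = |k|e^{iη} with η ∈ [0, π/2). Then sup { |(ik − z)/(ik + z)| : z ∈ ℂ, Im z > 0 } = ((1 + sin η)/(1 − sin η))^{1/2}, where sin η = Im k / |k|. -/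
open Complex Filter Topology

/-- Let `k` be a nonzero complex number with `Re k > 0` and `Im k ≥ 0`, so
that `k = |k|e^{iη}` with `η ∈ [0, π/2)` and `sin η = Im k / |k|`.  Then
`sup { |(ik − z)/(ik + z)| : Im z > 0 } = ((1 + sin η)/(1 − sin η))^{1/2}`. -/
theorem stmt_8 (k : ℂ) (hre : 0 < k.re) (him : 0 ≤ k.im) :
    (⨆ z : {z : ℂ // 0 < z.im},
        ‖(Complex.I * k - (z : ℂ)) / (Complex.I * k + (z : ℂ))‖) =
      Real.sqrt ((1 + k.im / ‖k‖) / (1 - k.im / ‖k‖)) := by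
  have hk : k ≠ 0 := fun h => by simp [h] at hre
  set r := ‖k‖ with hrdef
  have hr : 0 < r := norm_pos_iff.mpr hk
  have hr2 : r ^ 2 = k.re ^ 2 + k.im ^ 2 := by
    rw [hrdef, Complex.sq_norm, Complex.normSq_apply]; ring
  have hs1 : k.im < r := by nlinarith
  have h1s : 0 < 1 - k.im / r := by
    have : k.im / r < 1 := (div_lt_one hr).mpr hs1
    linarith
  have h1p : 0 ≤ 1 + k.im / r := by positivity
  have htar0 : 0 ≤ (1 + k.im / r) / (1 - k.im / r) := div_nonneg h1p h1s.le
  -- denominator nonzero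
  have hden : ∀ z : ℂ, 0 < z.im → Complex.I * k + z ≠ 0 := by
    intro z hz h
    have h2 : (Complex.I * k + z).im = k.re + z.im := by
      simp [Complex.add_im, Complex.mul_im]
    rw [h] at h2
    simp only [Complex.zero_im] at h2
    linarith
  -- key pointwise inequality
  have hratio : ∀ z : ℂ, 0 < z.im →
      Complex.normSq (Complex.I * k - z) * (1 - k.im / r) ≤
        (1 + k.im / r) * Complex.normSq (Complex.I * k + z) := by
    intro z hz
    have hr2' : k.im * r ^ 2 = k.im * (k.re ^ 2 + k.im ^ 2) := by rw [hr2]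
    have key : (r - k.im) * Complex.normSq (Complex.I * k - z) ≤
        (r + k.im) * Complex.normSq (Complex.I * k + z) := by
      simp only [Complex.normSq_apply, Complex.sub_re, Complex.sub_im, Complex.add_re,
        Complex.add_im, Complex.mul_re, Complex.mul_im, Complex.I_re, Complex.I_im]
      nlinarith [mul_nonneg him (sq_nonneg (z.re - r)), mul_nonneg him (sq_nonneg z.im),
        mul_pos (mul_pos hr hre) hz, hr2']
    rw [← mul_le_mul_iff_of_pos_left hr]
    calc r * (Complex.normSq (Complex.I * k - z) * (1 - k.im / r))
        = (r - k.im) * Complex.normSq (Complex.I * k - z) := by field_simp; try ring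
      _ ≤ (r + k.im) * Complex.normSq (Complex.I * k + z) := key
      _ = r * ((1 + k.im / r) * Complex.normSq (Complex.I * k + z)) := by field_simp; try ring
  -- pointwise abs bound
  have habs : ∀ z : ℂ, 0 < z.im →
      ‖(Complex.I * k - z) / (Complex.I * k + z)‖ ≤
        Real.sqrt ((1 + k.im / r) / (1 - k.im / r)) := by
    intro z hz
    rw [Real.le_sqrt (norm_nonneg _) htar0, norm_div, div_pow, Complex.sq_norm,
      Complex.sq_norm, div_le_div_iff₀ (Complex.normSq_pos.mpr (hden z hz)) h1s]
    exact hratio z hz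
  haveI : Nonempty {z : ℂ // 0 < z.im} := ⟨⟨Complex.I, by simp⟩⟩
  have hbdd : BddAbove (Set.range fun z : {z : ℂ // 0 < z.im} =>
      ‖(Complex.I * k - (z : ℂ)) / (Complex.I * k + (z : ℂ))‖) := by
    refine ⟨Real.sqrt ((1 + k.im / r) / (1 - k.im / r)), ?_⟩
    rintro x ⟨z, rfl⟩
    exact habs z z.2
  refine le_antisymm (ciSup_le fun z => habs z z.2) ?_
  -- lower bound via a limiting sequence
  have hlim0 : (Complex.I * k + (r : ℂ)) ≠ 0 := by
    intro h
    have h2 : (Complex.I * k + (r : ℂ)).im = k.re := by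
      simp [Complex.add_im, Complex.mul_im]
    rw [h] at h2
    simp only [Complex.zero_im] at h2
    linarith
  have hL : ‖(Complex.I * k - (r : ℂ)) / (Complex.I * k + (r : ℂ))‖ =
      Real.sqrt ((1 + k.im / r) / (1 - k.im / r)) := by
    rw [norm_div, Complex.norm_def, Complex.norm_def,
      ← Real.sqrt_div (Complex.normSq_nonneg _)]
    congr 1
    rw [div_eq_div_iff (Complex.normSq_pos.mpr hlim0).ne' h1s.ne']
    simp only [Complex.normSq_apply, Complex.sub_re, Complex.sub_im, Complex.add_re,
      Complex.add_im, Complex.mul_re, Complex.mul_im, Complex.I_re, Complex.I_im,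
      Complex.ofReal_re, Complex.ofReal_im]
    field_simp
    nlinarith [hr2, hr]
  set F : ℝ → ℝ := fun t => ‖(Complex.I * k - ((r : ℂ) + (t : ℂ) * Complex.I)) /
      (Complex.I * k + ((r : ℂ) + (t : ℂ) * Complex.I))‖ with hF
  have hcont : ContinuousAt F 0 := by
    apply continuous_norm.continuousAt.comp
    apply ContinuousAt.div
    · fun_prop
    · fun_prop
    · simpa using hlim0
  have htend : Tendsto (fun n : ℕ => F (1 / (n + 1))) atTop
      (𝓝 (Real.sqrt ((1 + k.im / r) / (1 - k.im / r)))) := by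
    have h0 : F 0 = Real.sqrt ((1 + k.im / r) / (1 - k.im / r)) := by
      simp only [hF, Complex.ofReal_zero, zero_mul, add_zero]
      exact hL
    rw [← h0]
    exact hcont.tendsto.comp tendsto_one_div_add_atTop_nhds_zero_nat
  refine le_of_tendsto htend (Filter.Eventually.of_forall fun n => ?_)
  have hz : (0 : ℝ) < ((r : ℂ) + ((1 / (n + 1) : ℝ) : ℂ) * Complex.I).im := by
    have : ((r : ℂ) + ((1 / (n + 1) : ℝ) : ℂ) * Complex.I).im = 1 / (n + 1) := by
      rw [Complex.add_im, Complex.ofReal_im, Complex.mul_im, Complex.I_re, Complex.I_im,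
        Complex.ofReal_re, Complex.ofReal_im]
      ring
    rw [this]
    positivity
  exact le_ciSup hbdd ⟨(r : ℂ) + ((1 / (n + 1) : ℝ) : ℂ) * Complex.I, hz⟩
end

section
/- Let C < ∞ and let f_n (n ∈ ℕ) and f_∞ be analytic functions on the open unit disk 𝔻 with |f_n(z)| ≤ C and |f_∞(z)| ≤ C for all z ∈ 𝔻 and all n, and suppose f_n(z) → f_∞(z) as n → ∞ for every z ∈ 𝔻. Suppose further that g_n, g_∞ : [0,2π) → ℂ are measurable functions such that for almost every θ, f_n(re^{iθ}) → g_n(θ) as r ↑ 1 for each n, and f_∞(re^{iθ}) → g_∞(θ) as r ↑ 1. Then g_n → g_∞ weak-*: for every G ∈ L¹([0,2π)), ∫₀^{2π} G(θ) g_n(θ) dθ/(2π) → ∫₀^{2π} G(θ) g_∞(θ) dθ/(2π) as n → ∞. -/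
open MeasureTheory Filter Set Metric
open scoped Topology Real
open Complex (I)

noncomputable section


/-- Set integral over `Ico 0 (2π)` of the angular form of a circle integral. -/
lemma circle_to_Ico (F : ℝ → ℂ) :
    (∫ θ : ℝ in (0)..(2 * π), F θ) = ∫ θ in Ico (0:ℝ) (2 * π), F θ := by
  rw [intervalIntegral.integral_of_le Real.two_pi_pos.le]
  exact (setIntegral_congr_set Ico_ae_eq_Ioc).symm

lemma exp_I_ne_zero (θ : ℝ) : Complex.exp (θ * I) ≠ 0 := Complex.exp_ne_zero _

/-- Vanishing of positive-frequency circle averages of an analytic function. -/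
lemma circle_avg_zero {f : ℂ → ℂ} (hd : DifferentiableOn ℂ f (ball 0 1)) (m : ℕ)
    {r : ℝ} (hr : r ∈ Ioo (0:ℝ) 1) :
    ∫ θ in Ico (0:ℝ) (2 * π),
      Complex.exp (((m : ℂ) + 1) * I * θ) * f ((r : ℂ) * Complex.exp (I * θ)) = 0 := by
  have hsub : closedBall (0:ℂ) r ⊆ ball 0 1 := by
    intro z hz
    simp only [mem_closedBall, mem_ball, Complex.dist_eq, sub_zero] at hz ⊢
    exact lt_of_le_of_lt hz hr.2
  have h0 : (∮ z in C(0, r), z ^ m • f z) = 0 := by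
    refine Complex.circleIntegral_eq_zero_of_differentiable_on_off_countable hr.1.le
      Set.countable_empty (ContinuousOn.smul ((continuous_pow m).continuousOn) ((hd.continuousOn.mono hsub)))
      fun z hz => ?_
    have hz1 : z ∈ ball (0:ℂ) 1 := ball_subset_ball hr.2.le hz.1
    exact ((differentiableAt_id.pow m).smul
      ((hd.differentiableAt (isOpen_ball.mem_nhds hz1))))
  have key : (∮ z in C(0, r), z ^ m • f z)
      = (I * (r:ℂ) ^ (m+1)) * ∫ θ in Ico (0:ℝ) (2 * π),
          Complex.exp (((m : ℂ) + 1) * I * θ) * f ((r : ℂ) * Complex.exp (I * θ)) := by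
    rw [circleIntegral, ← circle_to_Ico, ← intervalIntegral.integral_const_mul]
    refine intervalIntegral.integral_congr fun θ _ => ?_
    simp only [deriv_circleMap, circleMap, zero_add, smul_eq_mul]
    rw [mul_comm ((θ:ℂ)) I]
    have hexp : Complex.exp (((m : ℂ) + 1) * I * θ) = Complex.exp (I * θ) ^ (m + 1) := by
      rw [← Complex.exp_nat_mul]; push_cast; ring_nf
    rw [hexp]
    ring
  rw [key] at h0
  have hne : (I * (r:ℂ) ^ (m+1)) ≠ 0 := by
    apply mul_ne_zero Complex.I_ne_zero
    exact pow_ne_zero _ (by exact_mod_cast hr.1.ne')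
  exact (mul_eq_zero.mp h0).resolve_left hne



/-- The `m`-th Cauchy-type circle average is radius-independent up to `R^m`. -/
lemma circle_avg_eq {f : ℂ → ℂ} (hd : DifferentiableOn ℂ f (ball 0 1)) (m : ℕ)
    {r s : ℝ} (hr : r ∈ Ioo (0:ℝ) 1) (hs : s ∈ Ioo (0:ℝ) 1) :
    (∫ θ in Ico (0:ℝ) (2 * π),
        Complex.exp (-((m : ℂ) * I * θ)) * f ((r : ℂ) * Complex.exp (I * θ))) * (s : ℂ) ^ m
      = (∫ θ in Ico (0:ℝ) (2 * π),
        Complex.exp (-((m : ℂ) * I * θ)) * f ((s : ℂ) * Complex.exp (I * θ))) * (r : ℂ) ^ m := by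
  set E : ℝ → ℂ := fun R => ∮ z in C(0, R), (z:ℂ)⁻¹ ^ m • (z:ℂ)⁻¹ • f z with hE
  have hser : ∀ R : ℝ, R ∈ Ioo (0:ℝ) 1 →
      HasFPowerSeriesAt f (cauchyPowerSeries f 0 R) 0 := by
    intro R hR
    have hsub : closedBall (0:ℂ) R ⊆ ball 0 1 := by
      intro z hz
      simp only [mem_closedBall, mem_ball, Complex.dist_eq, sub_zero] at hz ⊢
      exact lt_of_le_of_lt hz hR.2
    have h := DifferentiableOn.hasFPowerSeriesOnBall (R := ⟨R, hR.1.le⟩) (c := 0) (f := f)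
      (hd.mono hsub) (by exact_mod_cast hR.1)
    exact h.hasFPowerSeriesAt
  have hEeq : E r = E s := by
    have h1 := hser r hr
    have h2 := hser s hs
    have heq := h1.eq_formalMultilinearSeries h2
    have happ : (cauchyPowerSeries f 0 r m fun _ => (1:ℂ))
        = (cauchyPowerSeries f 0 s m fun _ => (1:ℂ)) := by rw [heq]
    rw [cauchyPowerSeries_apply, cauchyPowerSeries_apply] at happ
    have hne : ((2 * Real.pi * I : ℂ))⁻¹ ≠ 0 := by
      simp [Complex.I_ne_zero, Real.pi_ne_zero]
    have := smul_right_injective ℂ hne happ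
    simpa [hE, one_div, smul_eq_mul] using this
  have key : ∀ R : ℝ, R ∈ Ioo (0:ℝ) 1 →
      (∫ θ in Ico (0:ℝ) (2 * π),
        Complex.exp (-((m : ℂ) * I * θ)) * f ((R : ℂ) * Complex.exp (I * θ)))
      = -I * (R : ℂ) ^ m * E R := by
    intro R hR
    have hR0 : (R : ℂ) ≠ 0 := by exact_mod_cast hR.1.ne'
    rw [hE]
    show _ = -I * (R : ℂ) ^ m * ∮ z in C(0, R), (z:ℂ)⁻¹ ^ m • (z:ℂ)⁻¹ • f z
    rw [circleIntegral]
    rw [intervalIntegral.integral_of_le Real.two_pi_pos.le,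
      ← setIntegral_congr_set Ico_ae_eq_Ioc, ← integral_const_mul]
    refine setIntegral_congr_fun measurableSet_Ico fun θ _ => ?_
    simp only [deriv_circleMap, circleMap, zero_add, smul_eq_mul]
    have hexp : Complex.exp (-((m : ℂ) * I * θ)) = (Complex.exp (θ * I))⁻¹ ^ m := by
      rw [← Complex.exp_neg, ← Complex.exp_nat_mul]; push_cast; ring_nf
    rw [hexp, mul_comm I (θ:ℂ)]
    have hexpne : Complex.exp ((θ:ℂ) * I) ≠ 0 := Complex.exp_ne_zero _
    field_simp
    ring_nf
    rw [Complex.I_sq]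
    have hRm : (R:ℂ) ^ m * (R:ℂ)⁻¹ ^ m = 1 := by rw [← mul_pow, mul_inv_cancel₀ hR0, one_pow]
    linear_combination (-(Complex.exp (↑θ * I))⁻¹ ^ m * f (Complex.exp (↑θ * I) * ↑R)) * hRm
  rw [key r hr, key s hs, hEeq]
  ring



lemma mem_ball_of_radius {r : ℝ} (h0 : 0 ≤ r) (h1 : r < 1) (θ : ℝ) :
    (r : ℂ) * Complex.exp (I * θ) ∈ ball (0:ℂ) 1 := by
  have hre : ((I * (θ:ℂ)).re) = 0 := by simp
  simp only [mem_ball, Complex.dist_eq, sub_zero, norm_mul, Complex.norm_exp, hre, Real.exp_zero,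
    mul_one, Complex.norm_real, Real.norm_eq_abs, abs_of_nonneg h0]
  exact h1

lemma abs_exp_int_mul (c : ℤ) (θ : ℝ) : ‖Complex.exp ((c:ℂ) * I * θ)‖ = 1 := by
  rw [Complex.norm_exp]
  simp [Complex.mul_re]

lemma coeff_tendsto (C : ℝ) (f : ℕ → ℂ → ℂ) (flim : ℂ → ℂ)
    (hf : ∀ n, DifferentiableOn ℂ (f n) (Metric.ball 0 1))
    (hflim : DifferentiableOn ℂ flim (Metric.ball 0 1))
    (hfb : ∀ n, ∀ z ∈ Metric.ball (0 : ℂ) 1, ‖f n z‖ ≤ C)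
    (hflimb : ∀ z ∈ Metric.ball (0 : ℂ) 1, ‖flim z‖ ≤ C)
    (hconv : ∀ z ∈ Metric.ball (0 : ℂ) 1, Tendsto (fun n => f n z) atTop (𝓝 (flim z)))
    (g : ℕ → ℝ → ℂ) (glim : ℝ → ℂ)
    (hrad : ∀ᵐ θ : ℝ ∂(volume.restrict (Ico 0 (2 * Real.pi))),
      (∀ n, Tendsto (fun r : ℝ => f n ((r : ℂ) * Complex.exp (Complex.I * (θ : ℂ))))
          (𝓝[<] 1) (𝓝 (g n θ))) ∧
        Tendsto (fun r : ℝ => flim ((r : ℂ) * Complex.exp (Complex.I * (θ : ℂ))))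
          (𝓝[<] 1) (𝓝 (glim θ))) (k : ℤ) :
    Tendsto (fun n => ∫ θ in Ico (0:ℝ) (2 * π), Complex.exp ((k:ℂ) * I * θ) * g n θ) atTop
      (𝓝 (∫ θ in Ico (0:ℝ) (2 * π), Complex.exp ((k:ℂ) * I * θ) * glim θ)) := by
  set μ := volume.restrict (Ico (0:ℝ) (2 * π)) with hμ
  haveI : IsFiniteMeasure μ := ⟨by
    rw [hμ, Measure.restrict_apply_univ]; exact measure_Ico_lt_top⟩
  have hIoo : Ioo (0:ℝ) 1 ∈ 𝓝[<] (1:ℝ) :=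
    Ioo_mem_nhdsLT_of_mem (by constructor <;> norm_num)
  -- dominated convergence in the radial direction
  have hDCT : ∀ (F : ℂ → ℂ), DifferentiableOn ℂ F (ball 0 1) →
      (∀ z ∈ ball (0:ℂ) 1, ‖F z‖ ≤ C) →
      ∀ (bv : ℝ → ℂ), (∀ᵐ θ : ℝ ∂μ, Tendsto (fun r : ℝ => F ((r:ℂ) * Complex.exp (I * θ)))
          (𝓝[<] 1) (𝓝 (bv θ))) →
      ∀ (c : ℤ), Tendsto (fun r : ℝ => ∫ θ in Ico (0:ℝ) (2 * π),
          Complex.exp ((c:ℂ) * I * θ) * F ((r:ℂ) * Complex.exp (I * θ)))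
        (𝓝[<] 1) (𝓝 (∫ θ in Ico (0:ℝ) (2 * π), Complex.exp ((c:ℂ) * I * θ) * bv θ)) := by
    intro F hFd hFb bv hbv c
    refine tendsto_integral_filter_of_dominated_convergence (fun _ => C) ?_ ?_ ?_ ?_
    · filter_upwards [hIoo] with r hr
      refine Continuous.aestronglyMeasurable (Continuous.mul ?_ ?_)
      · exact Complex.continuous_exp.comp (continuous_const.mul Complex.continuous_ofReal)
      · exact hFd.continuousOn.comp_continuous
          (continuous_const.mul (Complex.continuous_exp.comp
            (continuous_const.mul Complex.continuous_ofReal)))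
          (fun θ => mem_ball_of_radius hr.1.le hr.2 θ)
    · filter_upwards [hIoo] with r hr
      refine Eventually.of_forall fun θ => ?_
      rw [norm_mul, abs_exp_int_mul, one_mul]
      exact hFb _ (mem_ball_of_radius hr.1.le hr.2 θ)
    · exact integrable_const C
    · filter_upwards [hbv] with θ hθ using hθ.const_mul _
  rcases lt_or_ge 0 k with hk | hk
  · -- positive frequencies: everything is zero
    set m : ℕ := k.toNat - 1 with hm
    have hk' : (k:ℂ) = (m:ℂ) + 1 := by
      have : ((m : ℤ) + 1) = k := by omega
      exact_mod_cast congrArg (Int.cast : ℤ → ℂ) this.symm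
    have hzero : ∀ (F : ℂ → ℂ), DifferentiableOn ℂ F (ball 0 1) →
        (∀ z ∈ ball (0:ℂ) 1, ‖F z‖ ≤ C) →
        ∀ (bv : ℝ → ℂ), (∀ᵐ θ : ℝ ∂μ, Tendsto (fun r : ℝ => F ((r:ℂ) * Complex.exp (I * θ)))
            (𝓝[<] 1) (𝓝 (bv θ))) →
        (∫ θ in Ico (0:ℝ) (2 * π), Complex.exp ((k:ℂ) * I * θ) * bv θ) = 0 := by
      intro F hFd hFb bv hbv
      refine tendsto_nhds_unique (hDCT F hFd hFb bv hbv k) ?_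
      refine tendsto_const_nhds.congr' ?_
      filter_upwards [hIoo] with r hr
      rw [show ((k:ℂ)) = (m:ℂ) + 1 from hk']
      exact (circle_avg_zero hFd m hr).symm
    have h1 : ∀ n, (∫ θ in Ico (0:ℝ) (2 * π), Complex.exp ((k:ℂ) * I * θ) * g n θ) = 0 :=
      fun n => hzero (f n) (hf n) (hfb n) (g n) (hrad.mono fun θ h => h.1 n)
    have h2 : (∫ θ in Ico (0:ℝ) (2 * π), Complex.exp ((k:ℂ) * I * θ) * glim θ) = 0 :=
      hzero flim hflim hflimb glim (hrad.mono fun θ h => h.2)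
    simp only [hμ, h1, h2]
    exact tendsto_const_nhds
  · -- nonpositive frequencies
    set m : ℕ := (-k).toNat with hm
    have hk' : (k:ℂ) = -(m:ℂ) := by
      have h1 : (m : ℤ) = -k := by omega
      have h2 : ((m:ℤ) : ℂ) = ((-k : ℤ) : ℂ) := by exact_mod_cast congrArg (Int.cast : ℤ → ℂ) h1
      push_cast at h2
      rw [h2, neg_neg]
    have h12 : (1/2 : ℝ) ∈ Ioo (0:ℝ) 1 := by norm_num
    have hmem12 : ∀ θ : ℝ, ((1/2 : ℝ) : ℂ) * Complex.exp (I * θ) ∈ ball (0:ℂ) 1 :=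
      fun θ => mem_ball_of_radius (by norm_num) (by norm_num) θ
    have h2m : ((1/2 : ℝ) : ℂ) ^ m * 2 ^ m = 1 := by
      push_cast; rw [← mul_pow]; norm_num
    have hlimF : ∀ (F : ℂ → ℂ), DifferentiableOn ℂ F (ball 0 1) →
        (∀ z ∈ ball (0:ℂ) 1, ‖F z‖ ≤ C) →
        ∀ (bv : ℝ → ℂ), (∀ᵐ θ : ℝ ∂μ, Tendsto (fun r : ℝ => F ((r:ℂ) * Complex.exp (I * θ)))
            (𝓝[<] 1) (𝓝 (bv θ))) →
        (∫ θ in Ico (0:ℝ) (2 * π), Complex.exp ((k:ℂ) * I * θ) * bv θ)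
          = (∫ θ in Ico (0:ℝ) (2 * π),
              Complex.exp (-((m:ℂ) * I * θ)) * F (((1/2 : ℝ) : ℂ) * Complex.exp (I * θ))) * 2 ^ m := by
      intro F hFd hFb bv hbv
      refine tendsto_nhds_unique (hDCT F hFd hFb bv hbv k) ?_
      simp only [hk', neg_mul]
      have hpow : Tendsto (fun r : ℝ => ((r:ℂ)) ^ m) (𝓝[<] (1:ℝ)) (𝓝 ((1:ℂ))) := by
        have := ((Complex.continuous_ofReal.pow m).tendsto (1:ℝ)).mono_left
          (nhdsWithin_le_nhds (s := Iio (1:ℝ)))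
        convert this using 2 <;> simp
      have htend : Tendsto (fun r : ℝ =>
          (∫ θ in Ico (0:ℝ) (2 * π),
            Complex.exp (-((m:ℂ) * I * θ)) * F (((1/2 : ℝ) : ℂ) * Complex.exp (I * θ)))
              * (r:ℂ) ^ m * 2 ^ m)
          (𝓝[<] (1:ℝ))
          (𝓝 ((∫ θ in Ico (0:ℝ) (2 * π),
            Complex.exp (-((m:ℂ) * I * θ)) * F (((1/2 : ℝ) : ℂ) * Complex.exp (I * θ))) * 2 ^ m)) := by
        have := (hpow.const_mul (∫ θ in Ico (0:ℝ) (2 * π),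
          Complex.exp (-((m:ℂ) * I * θ)) * F (((1/2 : ℝ) : ℂ) * Complex.exp (I * θ)))).mul_const
            ((2:ℂ) ^ m)
        simpa [mul_comm] using this
      refine Tendsto.congr' ?_ htend
      filter_upwards [hIoo] with r hr
      have hkey := circle_avg_eq hFd m hr h12
      rw [← hkey, mul_assoc, h2m, mul_one]
    have h1 : ∀ n, (∫ θ in Ico (0:ℝ) (2 * π), Complex.exp ((k:ℂ) * I * θ) * g n θ)
        = (∫ θ in Ico (0:ℝ) (2 * π),
            Complex.exp (-((m:ℂ) * I * θ)) * f n (((1/2 : ℝ) : ℂ) * Complex.exp (I * θ))) * 2 ^ m :=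
      fun n => hlimF (f n) (hf n) (hfb n) (g n) (hrad.mono fun θ h => h.1 n)
    have h2 : (∫ θ in Ico (0:ℝ) (2 * π), Complex.exp ((k:ℂ) * I * θ) * glim θ)
        = (∫ θ in Ico (0:ℝ) (2 * π),
            Complex.exp (-((m:ℂ) * I * θ)) * flim (((1/2 : ℝ) : ℂ) * Complex.exp (I * θ))) * 2 ^ m :=
      hlimF flim hflim hflimb glim (hrad.mono fun θ h => h.2)
    simp only [hμ, h1, h2]
    refine Tendsto.mul_const _ ?_
    refine tendsto_integral_filter_of_dominated_convergence (fun _ => C) ?_ ?_ ?_ ?_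
    · refine Eventually.of_forall fun n => Continuous.aestronglyMeasurable (Continuous.mul ?_ ?_)
      · exact Complex.continuous_exp.comp ((continuous_const.mul Complex.continuous_ofReal).neg)
      · exact (hf n).continuousOn.comp_continuous
          (continuous_const.mul (Complex.continuous_exp.comp
            (continuous_const.mul Complex.continuous_ofReal))) hmem12
    · refine Eventually.of_forall fun n => Eventually.of_forall fun θ => ?_
      rw [norm_mul]
      have habs : ‖Complex.exp (-((m:ℂ) * I * θ))‖ = 1 := by
        rw [show -((m:ℂ) * I * (θ:ℂ)) = ((-(m:ℤ) : ℤ):ℂ) * I * θ by push_cast; ring]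
        exact abs_exp_int_mul _ θ
      rw [habs, one_mul]
      exact hfb n _ (hmem12 θ)
    · exact integrable_const C
    · exact Eventually.of_forall fun θ => (hconv _ (hmem12 θ)).const_mul _



lemma measurable_liftIco (T a : ℝ) [hT : Fact (0 < T)] {F : ℝ → ℂ} (hF : Measurable F) :
    Measurable (AddCircle.liftIco T a F) := by
  have h : AddCircle.liftIco T a F
      = (fun x : Ico a (a + T) => F x) ∘ (AddCircle.measurableEquivIco T a) := rfl
  rw [h]
  exact (hF.comp measurable_subtype_coe).comp (AddCircle.measurableEquivIco T a).measurable

lemma integral_addCircle_eq (T : ℝ) [hT : Fact (0 < T)] (φ : AddCircle T → ℂ) :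
    ∫ x, φ x = ∫ θ in Ico (0:ℝ) T, φ θ := by
  rw [← AddCircle.integral_preimage T 0 φ, zero_add]
  exact (setIntegral_congr_set Ico_ae_eq_Ioc).symm

/-- Let `f_n` and `f_∞` be analytic functions on the open unit disk,
uniformly bounded by `C`, with `f_n(z) → f_∞(z)` for every `z` in the disk.  Suppose
`g_n, g_∞` are measurable and, for almost every `θ`, are the radial boundary values of
`f_n, f_∞`.  Then `g_n → g_∞` weak-*: for every `G ∈ L¹([0,2π))`,
`∫ G(θ) g_n(θ) dθ/(2π) → ∫ G(θ) g_∞(θ) dθ/(2π)`. -/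
theorem stmt_9 (C : ℝ) (f : ℕ → ℂ → ℂ) (flim : ℂ → ℂ)
    (hf : ∀ n, DifferentiableOn ℂ (f n) (Metric.ball 0 1))
    (hflim : DifferentiableOn ℂ flim (Metric.ball 0 1))
    (hfb : ∀ n, ∀ z ∈ Metric.ball (0 : ℂ) 1, ‖f n z‖ ≤ C)
    (hflimb : ∀ z ∈ Metric.ball (0 : ℂ) 1, ‖flim z‖ ≤ C)
    (hconv : ∀ z ∈ Metric.ball (0 : ℂ) 1, Tendsto (fun n => f n z) atTop (𝓝 (flim z)))
    (g : ℕ → ℝ → ℂ) (glim : ℝ → ℂ)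
    (hgm : ∀ n, Measurable (g n)) (hglimm : Measurable glim)
    (hrad : ∀ᵐ θ : ℝ ∂(volume.restrict (Ico 0 (2 * Real.pi))),
      (∀ n, Tendsto (fun r : ℝ => f n ((r : ℂ) * Complex.exp (Complex.I * (θ : ℂ))))
          (𝓝[<] 1) (𝓝 (g n θ))) ∧
        Tendsto (fun r : ℝ => flim ((r : ℂ) * Complex.exp (Complex.I * (θ : ℂ))))
          (𝓝[<] 1) (𝓝 (glim θ))) :
    ∀ G : ℝ → ℂ, IntegrableOn G (Ico 0 (2 * Real.pi)) →
      Tendsto (fun n => ∫ θ in Ico 0 (2 * Real.pi), G θ * g n θ / (2 * Real.pi))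
        atTop (𝓝 (∫ θ in Ico 0 (2 * Real.pi), G θ * glim θ / (2 * Real.pi))) := by
  intro G hG
  haveI hfact : Fact (0 < 2 * π) := ⟨Real.two_pi_pos⟩
  have hC0 : 0 ≤ C :=
    le_trans (norm_nonneg _) (hflimb 0 (mem_ball_self one_pos))
  set μ := volume.restrict (Ico (0:ℝ) (2 * π)) with hμdef
  have hIoo : Ioo (0:ℝ) 1 ∈ 𝓝[<] (1:ℝ) :=
    Ioo_mem_nhdsLT_of_mem (by constructor <;> norm_num)
  have h2πne : ((2:ℂ) * (π:ℂ)) ≠ 0 := by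
    simp [Complex.ofReal_ne_zero, Real.pi_ne_zero]
  -- a.e. bounds for the boundary values
  have hgb : ∀ᵐ θ : ℝ ∂μ, (∀ n, ‖g n θ‖ ≤ C) ∧ ‖glim θ‖ ≤ C := by
    filter_upwards [hrad] with θ hθ
    have key : ∀ (F : ℂ → ℂ), (∀ z ∈ ball (0:ℂ) 1, ‖F z‖ ≤ C) → ∀ (w : ℂ),
        Tendsto (fun r : ℝ => F ((r:ℂ) * Complex.exp (I * θ))) (𝓝[<] 1) (𝓝 w) →
        ‖w‖ ≤ C := by
      intro F hFb w hw
      have habs : Tendsto (fun r : ℝ => ‖F ((r:ℂ) * Complex.exp (I * θ))‖)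
          (𝓝[<] (1:ℝ)) (𝓝 (‖w‖)) := (continuous_norm.tendsto _).comp hw
      refine le_of_tendsto habs ?_
      filter_upwards [hIoo] with r hr
      exact hFb _ (mem_ball_of_radius hr.1.le hr.2 θ)
    exact ⟨fun n => key (f n) (hfb n) _ (hθ.1 n), key flim hflimb _ hθ.2⟩
  -- lifting to the circle
  set Gm := hG.1.mk G with hGmdef
  have hGsm : StronglyMeasurable Gm := hG.1.stronglyMeasurable_mk
  have hGG' : G =ᵐ[μ] Gm := hG.1.ae_eq_mk
  set Gc : AddCircle (2 * π) → ℂ := AddCircle.liftIco (2 * π) 0 Gm with hGc_def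
  set gc : ℕ → AddCircle (2 * π) → ℂ := fun n => AddCircle.liftIco (2 * π) 0 (g n) with hgc_def
  set gcl : AddCircle (2 * π) → ℂ := AddCircle.liftIco (2 * π) 0 glim with hgcl_def
  have hlift : ∀ (F : ℝ → ℂ) (θ : ℝ), θ ∈ Ico (0:ℝ) (2 * π) →
      AddCircle.liftIco (2 * π) 0 F ↑θ = F θ := by
    intro F θ hθ
    exact AddCircle.liftIco_coe_apply (by simpa using hθ)
  have hGc_m : Measurable Gc := measurable_liftIco _ _ hGsm.measurable
  have hgc_m : ∀ n, Measurable (gc n) := fun n => measurable_liftIco _ _ (hgm n)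
  have hgcl_m : Measurable gcl := measurable_liftIco _ _ hglimm
  set ν := (AddCircle.haarAddCircle : Measure (AddCircle (2 * π))) with hνdef
  -- transfer of integrals
  have hsmul : ∀ φ : AddCircle (2 * π) → ℂ,
      (∫ x, φ x) = ((2:ℂ) * (π:ℂ)) * ∫ x, φ x ∂ν := by
    intro φ
    rw [AddCircle.volume_eq_smul_haarAddCircle, integral_smul_measure,
      ENNReal.toReal_ofReal Real.two_pi_pos.le, ← hνdef, Complex.real_smul]
    push_cast
    ring
  -- a.e. bound on the circle
  have hgb_c : ∀ᵐ x ∂(volume : Measure (AddCircle (2 * π))),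
      (∀ n, ‖gc n x‖ ≤ C) ∧ ‖gcl x‖ ≤ C := by
    rw [← (AddCircle.measurePreserving_mk (2 * π) 0).map_eq]
    have hms : MeasurableSet {x : AddCircle (2 * π) |
        (∀ n, ‖gc n x‖ ≤ C) ∧ ‖gcl x‖ ≤ C} := by
      have hset : {x : AddCircle (2 * π) |
          (∀ n, ‖gc n x‖ ≤ C) ∧ ‖gcl x‖ ≤ C}
          = (⋂ n, {x | ‖gc n x‖ ≤ C}) ∩ {x | ‖gcl x‖ ≤ C} := by
        ext x; simp [mem_iInter]
      rw [hset]
      exact (MeasurableSet.iInter fun n =>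
        measurableSet_le (continuous_norm.measurable.comp (hgc_m n)) measurable_const).inter
        (measurableSet_le (continuous_norm.measurable.comp hgcl_m) measurable_const)
    rw [ae_map_iff AddCircle.measurable_mk'.aemeasurable hms]
    rw [zero_add, ← Measure.restrict_congr_set Ico_ae_eq_Ioc]
    filter_upwards [hgb, ae_restrict_mem measurableSet_Ico] with θ hθ hmem
    refine ⟨fun n => ?_, ?_⟩
    · simp only [hgc_def, mem_setOf_eq]
      rw [hlift (g n) θ hmem]
      exact hθ.1 n
    · simp only [hgcl_def, mem_setOf_eq]
      rw [hlift glim θ hmem]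
      exact hθ.2
  have hofRne : (ENNReal.ofReal (2 * π)) ≠ 0 := (ENNReal.ofReal_pos.mpr Real.two_pi_pos).ne'
  have hgb_h : ∀ᵐ x ∂ν, (∀ n, ‖gc n x‖ ≤ C) ∧ ‖gcl x‖ ≤ C := by
    have hv := hgb_c
    rw [AddCircle.volume_eq_smul_haarAddCircle] at hv
    rw [ae_iff] at hv ⊢
    rw [Measure.smul_apply, smul_eq_mul, mul_eq_zero] at hv
    exact hv.resolve_left hofRne
  have hb_n : ∀ n, ∀ᵐ x ∂ν, ‖gc n x‖ ≤ C := fun n => hgb_h.mono fun x h => h.1 n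
  have hb_l : ∀ᵐ x ∂ν, ‖gcl x‖ ≤ C := hgb_h.mono fun x h => h.2
  -- integrability of Gc
  have hGc_int_v : Integrable Gc (volume : Measure (AddCircle (2 * π))) := by
    refine ((AddCircle.measurePreserving_mk (2 * π) 0).integrable_comp
      hGc_m.aestronglyMeasurable).mp ?_
    rw [zero_add, ← Measure.restrict_congr_set Ico_ae_eq_Ioc]
    refine (hG.congr hGG').congr ?_
    filter_upwards [ae_restrict_mem measurableSet_Ico] with θ hθ
    simp only [hGc_def, Function.comp_apply]
    exact (hlift Gm θ hθ).symm
  have hGc_int : Integrable Gc ν := by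
    have h := hGc_int_v
    rw [AddCircle.volume_eq_smul_haarAddCircle] at h
    exact (integrable_smul_measure hofRne ENNReal.ofReal_ne_top).mp h
  -- products are integrable
  have hprod : ∀ (φ : AddCircle (2 * π) → ℂ), Integrable φ ν →
      ∀ (ψ : AddCircle (2 * π) → ℂ), Measurable ψ → (∀ᵐ x ∂ν, ‖ψ x‖ ≤ C) →
      Integrable (fun x => φ x * ψ x) ν := by
    intro φ hφ ψ hψm hψb
    have h := hφ.bdd_mul (c := C) hψm.aestronglyMeasurable
      (by simpa using hψb)
    exact h.congr (Eventually.of_forall fun x => mul_comm _ _)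
  -- Fourier coefficients converge
  have hfour : ∀ k : ℤ, Tendsto (fun n => ∫ x, (fourier k x) * gc n x ∂ν) atTop
      (𝓝 (∫ x, (fourier k x) * gcl x ∂ν)) := by
    intro k
    have hcoeff := coeff_tendsto C f flim hf hflim hfb hflimb hconv g glim hrad k
    have key : ∀ (K : ℝ → ℂ),
        (∫ x, (fourier k x) * (AddCircle.liftIco (2 * π) 0 K) x ∂ν)
          = ((2:ℂ) * (π:ℂ))⁻¹ * ∫ θ in Ico (0:ℝ) (2 * π),
              Complex.exp ((k:ℂ) * I * θ) * K θ := by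
      intro K
      have h1 : (∫ x, (fourier k x) * (AddCircle.liftIco (2 * π) 0 K) x)
          = ∫ θ in Ico (0:ℝ) (2 * π), Complex.exp ((k:ℂ) * I * θ) * K θ := by
        rw [integral_addCircle_eq]
        refine setIntegral_congr_fun measurableSet_Ico fun θ hθ => ?_
        rw [hlift K θ hθ]
        congr 1
        rw [fourier_coe_apply]
        congr 1
        push_cast
        field_simp
      have h2 := hsmul (fun x => (fourier k x) * (AddCircle.liftIco (2 * π) 0 K) x)
      rw [h1] at h2
      rw [h2]
      field_simp
    have e1 : ∀ n, (∫ x, (fourier k x) * gc n x ∂ν)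
        = ((2:ℂ) * (π:ℂ))⁻¹ * ∫ θ in Ico (0:ℝ) (2 * π),
            Complex.exp ((k:ℂ) * I * θ) * g n θ := fun n => key (g n)
    have e2 : (∫ x, (fourier k x) * gcl x ∂ν)
        = ((2:ℂ) * (π:ℂ))⁻¹ * ∫ θ in Ico (0:ℝ) (2 * π),
            Complex.exp ((k:ℂ) * I * θ) * glim θ := key glim
    simp only [e1, e2]
    exact hcoeff.const_mul _
  -- convergence against every element of the Fourier span
  have hQ : ∀ P : Lp ℂ 1 ν, P ∈ Submodule.span ℂ (Set.range (fourierLp (T := 2 * π) 1)) →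
      Tendsto (fun n => ∫ x, P x * gc n x ∂ν) atTop (𝓝 (∫ x, P x * gcl x ∂ν)) := by
    intro P hP
    induction hP using Submodule.span_induction with
    | mem x hx =>
      obtain ⟨k, rfl⟩ := hx
      have hcong := coeFn_fourierLp (T := 2 * π) 1 k
      have e : ∀ ψ : AddCircle (2 * π) → ℂ,
          (∫ x, (fourierLp (T := 2 * π) 1 k) x * ψ x ∂ν) = ∫ x, fourier k x * ψ x ∂ν :=
        fun ψ => integral_congr_ae (hcong.mono fun x hx => by simp only [hx])
      simp only [e]
      exact hfour k
    | zero =>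
      have e : ∀ ψ : AddCircle (2 * π) → ℂ,
          (∫ x, (0 : Lp ℂ 1 ν) x * ψ x ∂ν) = 0 := by
        intro ψ
        rw [show (0:ℂ) = ∫ _ : AddCircle (2 * π), (0:ℂ) ∂ν by simp]
        exact integral_congr_ae ((Lp.coeFn_zero ℂ 1 ν).mono fun x hx => by simp [hx])
      simp only [e]
      exact tendsto_const_nhds
    | add x y hx hy ihx ihy =>
      have hsplit : ∀ (ψ : AddCircle (2 * π) → ℂ), Measurable ψ →
          (∀ᵐ z ∂ν, ‖ψ z‖ ≤ C) →
          (∫ z, (x + y) z * ψ z ∂ν) = (∫ z, x z * ψ z ∂ν) + ∫ z, y z * ψ z ∂ν := by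
        intro ψ hψ hb
        have hxi : Integrable (fun z => x z * ψ z) ν :=
          hprod x (L1.integrable_coeFn x) ψ hψ hb
        have hyi : Integrable (fun z => y z * ψ z) ν :=
          hprod y (L1.integrable_coeFn y) ψ hψ hb
        rw [← integral_add hxi hyi]
        refine integral_congr_ae ((Lp.coeFn_add x y).mono fun z hz => ?_)
        simp only [hz, Pi.add_apply, add_mul]
      have ea : ∀ n, (∫ z, (x + y) z * gc n z ∂ν)
          = (∫ z, x z * gc n z ∂ν) + ∫ z, y z * gc n z ∂ν :=
        fun n => hsplit (gc n) (hgc_m n) (hb_n n)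
      have eb := hsplit gcl hgcl_m hb_l
      simp only [ea, eb]
      exact ihx.add ihy
    | smul a x hx ih =>
      have e : ∀ ψ : AddCircle (2 * π) → ℂ,
          (∫ z, (a • x) z * ψ z ∂ν) = a • ∫ z, x z * ψ z ∂ν := by
        intro ψ
        rw [← integral_smul]
        refine integral_congr_ae ((Lp.coeFn_smul a x).mono fun z hz => ?_)
        simp only [hz, Pi.smul_apply, smul_mul_assoc]
      simp only [e]
      exact ih.const_smul a
  -- reduce the goal to the circle
  have hmain : ∀ (K : ℝ → ℂ) (Kc : AddCircle (2 * π) → ℂ),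
      (∀ θ ∈ Ico (0:ℝ) (2 * π), Kc ↑θ = K θ) →
      (∫ θ in Ico (0:ℝ) (2 * π), G θ * K θ / (2 * Real.pi)) = ∫ x, Gc x * Kc x ∂ν := by
    intro K Kc hKc
    have h2 : (∫ θ in Ico (0:ℝ) (2 * π), G θ * K θ)
        = ∫ θ in Ico (0:ℝ) (2 * π), Gm θ * K θ :=
      integral_congr_ae (hGG'.mono fun θ hθ => by simp only [hθ])
    have h3 : (∫ x, Gc x * Kc x) = ∫ θ in Ico (0:ℝ) (2 * π), Gm θ * K θ := by
      rw [integral_addCircle_eq]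
      refine setIntegral_congr_fun measurableSet_Ico fun θ hθ => ?_
      simp only [hGc_def]
      rw [hlift Gm θ hθ, hKc θ hθ]
    have h4 := hsmul (fun x => Gc x * Kc x)
    rw [h3] at h4
    calc (∫ θ in Ico (0:ℝ) (2 * π), G θ * K θ / (2 * Real.pi))
        = (∫ θ in Ico (0:ℝ) (2 * π), G θ * K θ) / ((2:ℂ) * (π:ℂ)) := by
          rw [← integral_div]
      _ = (∫ θ in Ico (0:ℝ) (2 * π), Gm θ * K θ) / ((2:ℂ) * (π:ℂ)) := by rw [h2]
      _ = (((2:ℂ) * (π:ℂ)) * ∫ x, Gc x * Kc x ∂ν) / ((2:ℂ) * (π:ℂ)) := by rw [← h4]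
      _ = ∫ x, Gc x * Kc x ∂ν := by field_simp
  have e1 : ∀ n, (∫ θ in Ico (0:ℝ) (2 * π), G θ * g n θ / (2 * Real.pi))
      = ∫ x, Gc x * gc n x ∂ν :=
    fun n => hmain (g n) (gc n) (fun θ hθ => by simp only [hgc_def]; exact hlift (g n) θ hθ)
  have e2 : (∫ θ in Ico (0:ℝ) (2 * π), G θ * glim θ / (2 * Real.pi))
      = ∫ x, Gc x * gcl x ∂ν :=
    hmain glim gcl (fun θ hθ => by simp only [hgcl_def]; exact hlift glim θ hθ)
  simp only [hμdef, e1, e2]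
  -- the ε/3 argument
  rw [Metric.tendsto_atTop]
  intro ε hε
  have hdense : Dense ((Submodule.span ℂ (Set.range (fourierLp (T := 2 * π) 1)) :
      Submodule ℂ (Lp ℂ 1 ν)) : Set (Lp ℂ 1 ν)) :=
    Submodule.dense_iff_topologicalClosure_eq_top.mpr
      (span_fourierLp_closure_eq_top (T := 2 * π) (p := 1) (by norm_num))
  have hδpos : 0 < ε / (4 * (C + 1)) := by positivity
  obtain ⟨P, hPmem, hPdist⟩ := hdense.exists_dist_lt (hGc_int.toL1 Gc) hδpos
  obtain ⟨N, hN⟩ := (Metric.tendsto_atTop.mp (hQ P hPmem)) (ε/2) (by positivity)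
  refine ⟨N, fun n hn => ?_⟩
  have hterm : ∀ (ψ : AddCircle (2 * π) → ℂ), Measurable ψ →
      (∀ᵐ z ∂ν, ‖ψ z‖ ≤ C) →
      dist (∫ x, Gc x * ψ x ∂ν) (∫ x, P x * ψ x ∂ν) ≤ C * dist (hGc_int.toL1 Gc) P := by
    intro ψ hψ hb
    have hint1 : Integrable (fun x => Gc x * ψ x) ν := hprod Gc hGc_int ψ hψ hb
    have hint2 : Integrable (fun x => P x * ψ x) ν := hprod P (L1.integrable_coeFn P) ψ hψ hb
    rw [dist_eq_norm, ← integral_sub hint1 hint2]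
    have hle : ‖∫ x, (Gc x * ψ x - P x * ψ x) ∂ν‖ ≤ ∫ x, ‖Gc x - P x‖ * C ∂ν := by
      refine le_trans (norm_integral_le_integral_norm _) ?_
      refine integral_mono_ae (hint1.sub hint2).norm
        (((hGc_int.sub (L1.integrable_coeFn P)).norm).mul_const C) ?_
      filter_upwards [hb] with x hx
      have hfac : Gc x * ψ x - P x * ψ x = (Gc x - P x) * ψ x := by ring
      rw [hfac, norm_mul]
      exact mul_le_mul_of_nonneg_left (by simpa using hx) (norm_nonneg _)
    refine hle.trans ?_
    rw [integral_mul_const]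
    have hdist : dist (hGc_int.toL1 Gc) P = ∫ x, ‖Gc x - P x‖ ∂ν := by
      rw [dist_eq_norm, L1.norm_eq_integral_norm]
      refine integral_congr_ae ?_
      filter_upwards [Lp.coeFn_sub (hGc_int.toL1 Gc) P, hGc_int.coeFn_toL1] with x hx1 hx2
      simp only [hx1, Pi.sub_apply, hx2]
    rw [hdist]
    exact le_of_eq (mul_comm _ _)
  have t1 := hterm (gc n) (hgc_m n) (hb_n n)
  have t3 := hterm gcl hgcl_m hb_l
  have t2 := hN n hn
  have htri := dist_triangle4 (∫ x, Gc x * gc n x ∂ν) (∫ x, P x * gc n x ∂ν)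
      (∫ x, P x * gcl x ∂ν) (∫ x, Gc x * gcl x ∂ν)
  rw [dist_comm (∫ x, P x * gcl x ∂ν) (∫ x, Gc x * gcl x ∂ν)] at htri
  have hCd : C * dist (hGc_int.toL1 Gc) P ≤ ε / 4 := by
    have hd0 : (0:ℝ) ≤ dist (hGc_int.toL1 Gc) P := dist_nonneg
    have h1 : C * dist (hGc_int.toL1 Gc) P ≤ C * (ε / (4 * (C + 1))) :=
      mul_le_mul_of_nonneg_left hPdist.le hC0
    have key : ε / (4 * (C + 1)) * (4 * (C + 1)) = ε := div_mul_cancel₀ _ (by positivity)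
    nlinarith [key, h1, hδpos.le]
  linarith

end
end

section
/- Let k ∈ ℂ with Im k ≥ 0 and Re k ≠ 0, and let 0 < λ ≤ κ. Then k² + μ² ≠ 0 for every μ ∈ [λ, κ], and | ∫_λ^κ 2μ² / ( k·(k² + μ²) ) dμ | ≤ (κ² − λ²)/(Re k)². -/
open Set

/-- Let `k ∈ ℂ` with `Im k ≥ 0` and `Re k ≠ 0`, and let `0 < λ ≤ κ`.
Then `k² + μ² ≠ 0` for every `μ ∈ [λ, κ]`, and
`|∫_λ^κ 2μ² / (k·(k² + μ²)) dμ| ≤ (κ² − λ²)/(Re k)²`. -/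
theorem stmt_19 (k : ℂ) (him : 0 ≤ k.im) (hre : k.re ≠ 0) (lam kap : ℝ)
    (hlam : 0 < lam) (hlk : lam ≤ kap) :
    (∀ μ ∈ Icc lam kap, k ^ 2 + (μ : ℂ) ^ 2 ≠ 0) ∧
      ‖∫ μ in lam..kap, 2 * (μ : ℂ) ^ 2 / (k * (k ^ 2 + (μ : ℂ) ^ 2))‖ ≤
        (kap ^ 2 - lam ^ 2) / k.re ^ 2 := by
  have hre2 : (0:ℝ) < k.re ^ 2 := by positivity
  have hfac : ∀ μ : ℝ, k ^ 2 + (μ:ℂ)^2 = (k + μ*Complex.I) * (k - μ*Complex.I) := by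
    intro μ
    have h := Complex.I_sq
    ring_nf
    rw [Complex.I_sq]
    ring
  have hbound : ∀ μ : ℝ, 0 < μ →
      μ * k.re ^ 2 ≤ ‖k * (k ^ 2 + (μ:ℂ)^2)‖ := by
    intro μ hμ0
    have h1 : |k.re| ≤ ‖k‖ := Complex.abs_re_le_norm k
    have h2 : μ ≤ ‖k + μ*Complex.I‖ := by
      have him' : (k + μ*Complex.I).im = k.im + μ := by simp
      calc μ ≤ k.im + μ := by linarith
        _ ≤ |(k + μ*Complex.I).im| := by rw [him']; exact le_abs_self _
        _ ≤ _ := Complex.abs_im_le_norm _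
    have h3 : |k.re| ≤ ‖k - μ*Complex.I‖ := by
      have hr : (k - μ*Complex.I).re = k.re := by simp
      calc |k.re| = |(k - μ*Complex.I).re| := by rw [hr]
        _ ≤ _ := Complex.abs_re_le_norm _
    have habs0 : (0:ℝ) ≤ |k.re| := abs_nonneg _
    have hstep : |k.re| * μ ≤ ‖k‖ * ‖k + μ*Complex.I‖ :=
      mul_le_mul h1 h2 hμ0.le (norm_nonneg _)
    have hstep2 : |k.re| * μ * |k.re| ≤
        ‖k‖ * ‖k + μ*Complex.I‖ * ‖k - μ*Complex.I‖ :=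
      mul_le_mul hstep h3 habs0 (by positivity)
    have heq : μ * k.re ^ 2 = |k.re| * μ * |k.re| := by
      rw [← sq_abs]; ring
    rw [hfac, norm_mul, norm_mul, heq]
    linarith [hstep2, (mul_assoc ‖k‖ ‖k + μ*Complex.I‖ ‖k - μ*Complex.I‖)]
  have hne : ∀ μ ∈ Icc lam kap, k ^ 2 + (μ : ℂ) ^ 2 ≠ 0 := by
    intro μ hμ
    have hμ0 : 0 < μ := lt_of_lt_of_le hlam hμ.1
    have hpos : 0 < ‖k * (k ^ 2 + (μ:ℂ)^2)‖ :=
      lt_of_lt_of_le (by positivity) (hbound μ hμ0)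
    intro h
    rw [h, mul_zero, norm_zero] at hpos
    exact lt_irrefl _ hpos
  refine ⟨hne, ?_⟩
  have hfb : ∀ μ ∈ Ioc lam kap,
      ‖2 * (μ : ℂ) ^ 2 / (k * (k ^ 2 + (μ : ℂ) ^ 2))‖ ≤ 2 * μ / k.re ^ 2 := by
    intro μ hμ
    have hμ0 : 0 < μ := lt_trans hlam hμ.1
    have hD : 0 < μ * k.re ^ 2 := by positivity
    have hDle := hbound μ hμ0
    rw [norm_div, norm_mul]
    have hnum : ‖(2:ℂ)‖ * ‖((μ:ℂ)^2)‖ = 2 * μ ^ 2 := by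
      rw [norm_pow]
      simp [abs_of_pos hμ0]
    rw [hnum]
    calc 2 * μ ^ 2 / ‖k * (k ^ 2 + (μ:ℂ)^2)‖
        ≤ 2 * μ ^ 2 / (μ * k.re ^ 2) :=
          div_le_div_of_nonneg_left (by positivity) hD hDle
      _ = 2 * μ / k.re ^ 2 := by field_simp
  have hgint : IntervalIntegrable (fun μ : ℝ => 2 * μ / k.re ^ 2) MeasureTheory.volume lam kap :=
    (Continuous.intervalIntegrable (by continuity) _ _)
  have hmain : ‖∫ μ in lam..kap, 2 * (μ : ℂ) ^ 2 / (k * (k ^ 2 + (μ : ℂ) ^ 2))‖ ≤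
      |∫ μ in lam..kap, 2 * μ / k.re ^ 2| := by
    apply intervalIntegral.norm_integral_le_abs_of_norm_le _ hgint
    rw [uIoc_of_le hlk]
    exact (MeasureTheory.ae_restrict_iff' measurableSet_Ioc).2 (MeasureTheory.ae_of_all _ hfb)
  have hval : (∫ μ in lam..kap, 2 * μ / k.re ^ 2) = (kap ^ 2 - lam ^ 2) / k.re ^ 2 := by
    have : (fun μ : ℝ => 2 * μ / k.re ^ 2) = fun μ : ℝ => (2 / k.re ^ 2) * μ := by
      funext μ; ring
    rw [this, intervalIntegral.integral_const_mul, integral_id]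
    field_simp
  rw [hval] at hmain
  rw [abs_of_nonneg (div_nonneg (by nlinarith) hre2.le)] at hmain
  exact hmain
end
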